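/- Let G be a graph on n vertices with minimum degree δ(G) ≥ (n+1)/2. Then G is hamiltonian-connected, i.e., between any two distinct vertices of G there exists a hamiltonian path. -/

import Mathlib

open SimpleGraph

/-- The disjoint union of an edge (on vertices 0,1) and `k` isolated vertices. -/
def K2uK (k : ℕ) : SimpleGraph (Fin (k + 2)) :=
  SimpleGraph.fromRel (fun a b => a = 0 ∧ b = 1)

/-- `G` contains no induced copy of `H`. -/
def HFree {α β : Type*} (H : SimpleGraph α) (G : SimpleGraph β) : Prop :=
  IsEmpty (H ↪g G)

/-- The number of connected components of a graph. -/
noncomputable def numComp {V : Type*} (G : SimpleGraph V) : ℕ :=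
  Nat.card G.ConnectedComponent

/-- `S` is a cut set of `G`: removing `S` leaves at least two components. -/
def IsCutSet {V : Type*} (G : SimpleGraph V) (S : Set V) : Prop :=
  2 ≤ numComp (G.induce (Sᶜ : Set V))

section Aux

variable {V : Type*} [Fintype V] [DecidableEq V] (G : SimpleGraph V)

/-- Build a walk from a chain of adjacent vertices indexed by `ℕ`. -/
lemma exists_walk_of_chain (f : ℕ → V) (k : ℕ)
    (hadj : ∀ i < k, G.Adj (f i) (f (i + 1))) :
    ∃ p : G.Walk (f 0) (f k), p.support = (List.range (k + 1)).map f := by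
  induction k with
  | zero => exact ⟨.nil, by rw [List.range_succ]; simp⟩
  | succ k ih =>
    obtain ⟨p, hp⟩ := ih (fun i hi => hadj i (by omega))
    refine ⟨p.concat (hadj k (by omega)), ?_⟩
    rw [SimpleGraph.Walk.support_concat, hp, List.range_succ, List.map_append]
    simp [List.concat_eq_append, List.range_succ]

/-- The rotation map `t ↦ (j + t) % (k+1)` is injective on `[0,k]`. -/
lemma mod_rot_inj (k j : ℕ) : ∀ t1 ≤ k, ∀ t2 ≤ k,
    (j + t1) % (k + 1) = (j + t2) % (k + 1) → t1 = t2 := by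
  intro t1 h1 t2 h2 h
  have h' : t1 % (k+1) = t2 % (k+1) :=
    Nat.ModEq.add_left_cancel' j h
  rwa [Nat.mod_eq_of_lt (by omega), Nat.mod_eq_of_lt (by omega)] at h'

/-- The rotation map is surjective onto `[0,k]`. -/
lemma mod_rot_surj (k j : ℕ) (hj : j ≤ k) : ∀ s ≤ k, ∃ t ≤ k,
    (j + t) % (k + 1) = s := by
  intro s hs
  rcases le_or_gt j s with h | h
  · exact ⟨s - j, by omega, by rw [show j + (s - j) = s by omega, Nat.mod_eq_of_lt (by omega)]⟩
  · refine ⟨s + k + 1 - j, by omega, ?_⟩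
    rw [show j + (s + k + 1 - j) = s + (k+1) by omega, Nat.add_mod_right, Nat.mod_eq_of_lt (by omega)]

/-- Rotating a cycle preserves consecutive adjacency. -/
lemma mod_rot_adj (c : ℕ → V) (k j : ℕ)
    (hadj : ∀ i < k, G.Adj (c i) (c (i + 1))) (hwrap : G.Adj (c k) (c 0)) :
    ∀ i < k, G.Adj (c ((j + i) % (k + 1))) (c ((j + i + 1) % (k + 1))) := by
  intro i hi
  have hk : 1 ≤ k := by omega
  set a := (j + i) % (k + 1) with ha
  have halt : a < k + 1 := Nat.mod_lt _ (by omega)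
  have hstep : (j + i + 1) % (k + 1) = (a + 1) % (k + 1) := by
    conv_lhs => rw [Nat.add_mod (j + i) 1]
    rw [← ha, Nat.mod_eq_of_lt (show (1:ℕ) < k + 1 by omega)]
  rcases eq_or_lt_of_le (show a + 1 ≤ k + 1 by omega) with he | hlt
  · have : (a + 1) % (k + 1) = 0 := by rw [he]; exact Nat.mod_self _
    rw [hstep, this]
    have : a = k := by omega
    rw [this]; exact hwrap
  · rw [hstep, Nat.mod_eq_of_lt hlt]
    exact hadj a (by omega)

end Aux

theorem stmt_12 {V : Type*} [Fintype V] [DecidableEq V] (G : SimpleGraph V)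
    [DecidableRel G.Adj]
    (hdeg : ((Fintype.card V : ℝ) + 1) / 2 ≤ (G.minDegree : ℝ)) :
    ∀ u v : V, u ≠ v → ∃ p : G.Walk u v, p.IsHamiltonian := by
  intro u v huv
  classical
  set n := Fintype.card V with hn
  -- numeric form of the degree condition
  have hd : n + 1 ≤ 2 * G.minDegree := by
    rw [div_le_iff₀ (by norm_num : (0:ℝ) < 2)] at hdeg
    have h2 : ((n : ℝ) + 1) ≤ ((2 * G.minDegree : ℕ) : ℝ) := by push_cast; linarith
    exact_mod_cast h2
  have hdx : ∀ x : V, n + 1 ≤ 2 * G.degree x := fun x =>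
    hd.trans (by have := G.minDegree_le_degree x; omega)
  -- every vertex has at least a good number of neighbors other than v
  have hNv : ∀ x : V, n - 1 ≤ 2 * ((G.neighborFinset x).erase v).card := by
    intro x
    have h1 : (G.neighborFinset x).card - 1 ≤ ((G.neighborFinset x).erase v).card :=
      Finset.pred_card_le_card_erase
    have h2 := hdx x
    rw [SimpleGraph.degree] at h2
    omega
  have hn3 : 3 ≤ n := by
    have := G.minDegree_le_degree u
    have := G.degree_lt_card_verts u
    omega
  -- the path predicate: paths avoiding v
  set P : ℕ → Prop := fun k => ∃ f : ℕ → V,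
      (∀ i < k, G.Adj (f i) (f (i + 1))) ∧
      (∀ i ≤ k, ∀ j ≤ k, f i = f j → i = j) ∧
      (∀ i ≤ k, f i ≠ v) with hP
  have hP0 : P 0 := ⟨fun _ => u, fun i hi => absurd hi (Nat.not_lt_zero i),
    fun i hi j hj _ => by omega, fun i _ => huv⟩
  -- boundedness of paths avoiding v
  have hPbound : ∀ k, P k → k ≤ n - 2 := by
    intro k ⟨f, hadj, hinj, hne⟩
    have hsub : (Finset.range (k+1)).image f ⊆ Finset.univ.erase v := by
      intro x hx
      obtain ⟨i, hi, rfl⟩ := Finset.mem_image.1 hx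
      rw [Finset.mem_range] at hi
      exact Finset.mem_erase.2 ⟨hne i (by omega), Finset.mem_univ _⟩
    have h1 : ((Finset.range (k+1)).image f).card = k + 1 := by
      rw [Finset.card_image_of_injOn, Finset.card_range]
      intro a ha b hb hab
      rw [Finset.mem_coe, Finset.mem_range] at ha hb
      exact hinj a (by omega) b (by omega) hab
    have h2 := Finset.card_le_card hsub
    rw [h1, Finset.card_erase_of_mem (Finset.mem_univ v), Finset.card_univ] at h2
    omega
  -- maximal path length
  set k0 := Nat.findGreatest P (n - 2) with hk0def
  have hPk0 : P k0 := Nat.findGreatest_spec (Nat.zero_le _) hP0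
  have hmax : ¬ P (k0 + 1) := by
    intro hPk
    exact Nat.findGreatest_is_greatest (by omega) (hPbound _ hPk) hPk
  obtain ⟨f, hadj, hinj, hne⟩ := hPk0
  have hk0n : k0 ≤ n - 2 := hPbound _ ⟨f, hadj, hinj, hne⟩
  -- closure: neighbors (≠ v) of the endpoints lie on the path
  have hextb : ∀ w, w ≠ v → G.Adj (f k0) w → ∃ i ≤ k0, f i = w := by
    intro w hwv hadjw
    by_contra hcon
    push_neg at hcon
    refine hmax ⟨fun t => if t ≤ k0 then f t else w, ?_, ?_, ?_⟩
    · intro i hi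
      rcases lt_or_eq_of_le (show i ≤ k0 by omega) with h | h
      · simp only [if_pos (show i ≤ k0 by omega), if_pos (show i + 1 ≤ k0 by omega)]
        exact hadj i h
      · rw [h]
        simp only [if_pos le_rfl, if_neg (show ¬ (k0 + 1 ≤ k0) by omega)]
        exact hadjw
    · intro i hi j hj hij
      by_cases h1 : i ≤ k0 <;> by_cases h2 : j ≤ k0 <;>
        simp only [if_pos, if_neg, h1, h2] at hij
      · exact hinj i h1 j h2 hij
      · exact absurd hij (hcon i h1)
      · exact absurd hij.symm (hcon j h2)
      · omega
    · intro i hi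
      by_cases h1 : i ≤ k0 <;> simp only [if_pos, if_neg, h1]
      · exact hne i h1
      · exact hwv
  have hextf : ∀ w, w ≠ v → G.Adj (f 0) w → ∃ i ≤ k0, f i = w := by
    intro w hwv hadjw
    by_contra hcon
    push_neg at hcon
    refine hmax ⟨fun t => if t ≤ k0 then f (k0 - t) else w, ?_, ?_, ?_⟩
    · intro i hi
      rcases lt_or_eq_of_le (show i ≤ k0 by omega) with h | h
      · simp only [if_pos (show i ≤ k0 by omega), if_pos (show i + 1 ≤ k0 by omega)]
        have := hadj (k0 - (i+1)) (by omega)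
        rw [show k0 - (i+1) + 1 = k0 - i by omega] at this
        exact this.symm
      · rw [h]
        simp only [if_pos le_rfl, if_neg (show ¬ (k0 + 1 ≤ k0) by omega), Nat.sub_self]
        exact hadjw
    · intro i hi j hj hij
      by_cases h1 : i ≤ k0 <;> by_cases h2 : j ≤ k0 <;>
        simp only [if_pos, if_neg, h1, h2] at hij
      · have := hinj (k0 - i) (by omega) (k0 - j) (by omega) hij
        omega
      · exact absurd hij (hcon _ (by omega))
      · exact absurd hij.symm (hcon _ (by omega))
      · omega
    · intro i hi
      by_cases h1 : i ≤ k0 <;> simp only [if_pos, if_neg, h1]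
      · exact hne _ (by omega)
      · exact hwv
  -- crossing argument: find i with f 0 ~ f (i+1) and f k0 ~ f i
  set A := (Finset.range k0).filter (fun i => G.Adj (f 0) (f (i+1))) with hA
  set B := (Finset.range k0).filter (fun i => G.Adj (f k0) (f i)) with hB
  have hAcard : n - 1 ≤ 2 * A.card := by
    have hsub : (G.neighborFinset (f 0)).erase v ⊆ A.image (fun i => f (i+1)) := by
      intro w hw
      obtain ⟨hwv, hwadj⟩ := Finset.mem_erase.1 hw
      rw [SimpleGraph.mem_neighborFinset] at hwadj
      obtain ⟨i, hi, rfl⟩ := hextf w hwv hwadj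
      have hi0 : i ≠ 0 := by rintro rfl; exact G.irrefl hwadj
      refine Finset.mem_image.2 ⟨i - 1, Finset.mem_filter.2 ⟨Finset.mem_range.2 (by omega), ?_⟩, by rw [show i - 1 + 1 = i by omega]⟩
      rw [show i - 1 + 1 = i by omega]; exact hwadj
    have := (Finset.card_le_card hsub).trans Finset.card_image_le
    have := hNv (f 0)
    omega
  have hBcard : n - 1 ≤ 2 * B.card := by
    have hsub : (G.neighborFinset (f k0)).erase v ⊆ B.image f := by
      intro w hw
      obtain ⟨hwv, hwadj⟩ := Finset.mem_erase.1 hw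
      rw [SimpleGraph.mem_neighborFinset] at hwadj
      obtain ⟨i, hi, rfl⟩ := hextb w hwv hwadj
      have hik : i ≠ k0 := by rintro rfl; exact G.irrefl hwadj
      exact Finset.mem_image.2 ⟨i, Finset.mem_filter.2 ⟨Finset.mem_range.2 (by omega), hwadj⟩, rfl⟩
    have := (Finset.card_le_card hsub).trans Finset.card_image_le
    have := hNv (f k0)
    omega
  obtain ⟨i, hiAB⟩ : ∃ i, i ∈ A ∩ B := by
    by_contra hcon
    push_neg at hcon
    have hdisj : A ∩ B = ∅ := Finset.eq_empty_of_forall_notMem hcon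
    have h1 : A ∪ B ⊆ Finset.range k0 :=
      Finset.union_subset (Finset.filter_subset _ _) (Finset.filter_subset _ _)
    have h2 := Finset.card_le_card h1
    have h3 := Finset.card_union_add_card_inter A B
    rw [hdisj] at h3
    simp only [Finset.card_empty, Finset.card_range] at h3 h2
    omega
  obtain ⟨hiA, hiB⟩ := Finset.mem_inter.1 hiAB
  have hik0 : i < k0 := Finset.mem_range.1 (Finset.mem_filter.1 hiA).1
  have hiA' : G.Adj (f 0) (f (i+1)) := (Finset.mem_filter.1 hiA).2
  have hiB' : G.Adj (f k0) (f i) := (Finset.mem_filter.1 hiB).2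
  -- the cycle through the path vertices
  set c : ℕ → V := fun t => if t ≤ i then f t else f (k0 + i + 1 - t) with hc
  have hc_adj : ∀ t < k0, G.Adj (c t) (c (t+1)) := by
    intro t ht
    rcases lt_trichotomy t i with h | h | h
    · simp only [hc, if_pos (show t ≤ i by omega), if_pos (show t + 1 ≤ i by omega)]
      exact hadj t (by omega)
    · subst h
      simp only [hc, if_pos le_rfl, if_neg (show ¬ (t + 1 ≤ t) by omega),
        show k0 + t + 1 - (t + 1) = k0 by omega]
      exact hiB'.symm
    · simp only [hc, if_neg (show ¬ (t ≤ i) by omega), if_neg (show ¬ (t + 1 ≤ i) by omega),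
        show k0 + i + 1 - (t + 1) = k0 + i - t by omega]
      have := hadj (k0 + i - t) (by omega)
      rw [show k0 + i - t + 1 = k0 + i + 1 - t by omega] at this
      exact this.symm
  have hc_wrap : G.Adj (c k0) (c 0) := by
    simp only [hc, if_neg (show ¬ (k0 ≤ i) by omega), if_pos (Nat.zero_le i),
      show k0 + i + 1 - k0 = i + 1 by omega]
    exact hiA'.symm
  have hc_img : ∀ s ≤ k0, ∃ t ≤ k0, c t = f s := by
    intro s hs
    rcases le_or_gt s i with h | h
    · exact ⟨s, hs, by simp [hc, if_pos h]⟩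
    · refine ⟨k0 + i + 1 - s, by omega, ?_⟩
      simp only [hc, if_neg (show ¬ (k0 + i + 1 - s ≤ i) by omega),
        show k0 + i + 1 - (k0 + i + 1 - s) = s by omega]
  have hc_img' : ∀ t ≤ k0, ∃ s ≤ k0, c t = f s := by
    intro t ht
    rcases le_or_gt t i with h | h
    · exact ⟨t, ht, by simp [hc, if_pos h]⟩
    · exact ⟨k0 + i + 1 - t, by omega, by simp [hc, if_neg (show ¬ (t ≤ i) by omega)]⟩
  have hc_inj : ∀ t1 ≤ k0, ∀ t2 ≤ k0, c t1 = c t2 → t1 = t2 := by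
    intro t1 h1 t2 h2 h
    by_cases ha : t1 ≤ i <;> by_cases hb : t2 ≤ i <;>
      simp only [hc, if_pos, if_neg, ha, hb] at h
    · exact hinj t1 (by omega) t2 (by omega) h
    · have := hinj t1 (by omega) (k0 + i + 1 - t2) (by omega) h; omega
    · have := hinj (k0 + i + 1 - t1) (by omega) t2 (by omega) h; omega
    · have := hinj (k0 + i + 1 - t1) (by omega) (k0 + i + 1 - t2) (by omega) h; omega
  have hc_ne : ∀ t ≤ k0, c t ≠ v := by
    intro t ht
    obtain ⟨s, hs, heq⟩ := hc_img' t ht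
    rw [heq]; exact hne s hs
  -- the maximal path covers all of V \ {v}
  have hcover : k0 = n - 2 := by
    by_contra hcon
    have hk0lt : k0 < n - 2 := lt_of_le_of_ne hk0n hcon
    -- find a vertex z off the path and ≠ v
    set S := ((Finset.range (k0+1)).image f) ∪ {v} with hS
    have hScard : S.card < n := by
      rw [hS]
      have h1 := Finset.card_union_le ((Finset.range (k0+1)).image f) {v}
      have h2 := Finset.card_image_le (f := f) (s := Finset.range (k0+1))
      rw [Finset.card_range] at h2
      simp only [Finset.card_singleton] at h1
      omega
    obtain ⟨z, hz⟩ : ∃ z, z ∉ S := by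
      by_contra h
      push_neg at h
      have : (Finset.univ : Finset V) ⊆ S := fun x _ => h x
      have := Finset.card_le_card this
      rw [Finset.card_univ] at this
      omega
    have hzv : z ≠ v := fun h => hz (by rw [hS, h]; exact Finset.mem_union_right _ (Finset.mem_singleton_self v))
    have hzim : ∀ s ≤ k0, f s ≠ z := by
      intro s hs h
      exact hz (Finset.mem_union_left _ (Finset.mem_image.2 ⟨s, Finset.mem_range.2 (by omega), h⟩))
    have hznadj : ¬ G.Adj (f 0) z := by
      intro h
      obtain ⟨s, hs, heq⟩ := hextf z hzv h
      exact hzim s hs heq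
    -- common neighbor of z and f 0
    obtain ⟨w, hw⟩ : ∃ w, w ∈ ((G.neighborFinset z).erase v) ∩ ((G.neighborFinset (f 0)).erase v) := by
      by_contra hcon2
      push_neg at hcon2
      set T := ((Finset.univ.erase v).erase z).erase (f 0) with hT
      have hTcard : T.card = n - 3 := by
        rw [hT, Finset.card_erase_of_mem, Finset.card_erase_of_mem, Finset.card_erase_of_mem (Finset.mem_univ v), Finset.card_univ]
        · rfl
        · exact Finset.mem_erase.2 ⟨hzv, Finset.mem_univ z⟩
        · refine Finset.mem_erase.2 ⟨hzim 0 (by omega), Finset.mem_erase.2 ⟨hne 0 (by omega), Finset.mem_univ _⟩⟩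
      have hs1 : (G.neighborFinset z).erase v ⊆ T := by
        intro w hw
        obtain ⟨hwv, hwadj⟩ := Finset.mem_erase.1 hw
        rw [SimpleGraph.mem_neighborFinset] at hwadj
        refine Finset.mem_erase.2 ⟨?_, Finset.mem_erase.2 ⟨fun h => G.irrefl (h ▸ hwadj), Finset.mem_erase.2 ⟨hwv, Finset.mem_univ _⟩⟩⟩
        rintro rfl
        exact hznadj hwadj.symm
      have hs2 : (G.neighborFinset (f 0)).erase v ⊆ T := by
        intro w hw
        obtain ⟨hwv, hwadj⟩ := Finset.mem_erase.1 hw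
        rw [SimpleGraph.mem_neighborFinset] at hwadj
        refine Finset.mem_erase.2 ⟨fun h => G.irrefl (h ▸ hwadj), Finset.mem_erase.2 ⟨?_, Finset.mem_erase.2 ⟨hwv, Finset.mem_univ _⟩⟩⟩
        rintro rfl
        exact hznadj hwadj
      have hun : ((G.neighborFinset z).erase v) ∪ ((G.neighborFinset (f 0)).erase v) ⊆ T :=
        Finset.union_subset hs1 hs2
      have h2 := Finset.card_le_card hun
      have h3 := Finset.card_union_add_card_inter ((G.neighborFinset z).erase v) ((G.neighborFinset (f 0)).erase v)
      have h4 : (((G.neighborFinset z).erase v) ∩ ((G.neighborFinset (f 0)).erase v)).card = 0 := by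
        rw [Finset.card_eq_zero]
        exact Finset.eq_empty_of_forall_notMem hcon2
      have h5 := hNv z
      have h6 := hNv (f 0)
      omega
    obtain ⟨hw1, hw2⟩ := Finset.mem_inter.1 hw
    obtain ⟨hwv, hwz⟩ := Finset.mem_erase.1 hw1
    rw [SimpleGraph.mem_neighborFinset] at hwz
    obtain ⟨-, hwf0⟩ := Finset.mem_erase.1 hw2
    rw [SimpleGraph.mem_neighborFinset] at hwf0
    -- w is on the cycle
    obtain ⟨s, hs, hfs⟩ := hextf w hwv hwf0
    obtain ⟨t, ht, hct⟩ := hc_img s hs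
    -- build a longer path: z followed by the rotated cycle
    refine hmax ⟨fun r => if r = 0 then z else c ((t + (r - 1)) % (k0 + 1)), ?_, ?_, ?_⟩
    · intro r hr
      by_cases h0 : r = 0
      · subst h0
        simp only [if_pos rfl, if_neg (by omega : ¬ (0 + 1 = 0))]
        rw [show (0:ℕ) + 1 - 1 = 0 by omega, Nat.add_zero, Nat.mod_eq_of_lt (by omega), hct, hfs]
        exact hwz
      · simp only [if_neg h0, if_neg (by omega : ¬ (r + 1 = 0))]
        have := mod_rot_adj G c k0 t hc_adj hc_wrap (r - 1) (by omega)
        rw [show t + (r - 1) + 1 = t + (r + 1 - 1) by omega] at this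
        exact this
    · intro a ha b hb hab
      dsimp only at hab
      by_cases h1 : a = 0 <;> by_cases h2 : b = 0
      · omega
      · exfalso
        rw [if_pos h1, if_neg h2] at hab
        have hlt : (t + (b - 1)) % (k0 + 1) < k0 + 1 := Nat.mod_lt _ (by omega)
        obtain ⟨s', hs', heq⟩ := hc_img' ((t + (b - 1)) % (k0 + 1)) (by omega)
        exact hzim s' hs' (by rw [← heq, ← hab])
      · exfalso
        rw [if_neg h1, if_pos h2] at hab
        have hlt : (t + (a - 1)) % (k0 + 1) < k0 + 1 := Nat.mod_lt _ (by omega)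
        obtain ⟨s', hs', heq⟩ := hc_img' ((t + (a - 1)) % (k0 + 1)) (by omega)
        exact hzim s' hs' (by rw [← heq, hab])
      · rw [if_neg h1, if_neg h2] at hab
        have hlt1 : (t + (a - 1)) % (k0 + 1) < k0 + 1 := Nat.mod_lt _ (by omega)
        have hlt2 : (t + (b - 1)) % (k0 + 1) < k0 + 1 := Nat.mod_lt _ (by omega)
        have h3 := hc_inj ((t + (a - 1)) % (k0 + 1)) (by omega) ((t + (b - 1)) % (k0 + 1)) (by omega) hab
        have := mod_rot_inj k0 t (a - 1) (by omega) (b - 1) (by omega) h3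
        omega
    · intro r hr
      by_cases h0 : r = 0
      · simp only [if_pos h0]; exact hzv
      · simp only [if_neg h0]
        have := Nat.mod_lt (t + (r-1)) (show 0 < k0 + 1 by omega)
        exact hc_ne _ (by omega)
  -- every non-v vertex is on the path
  have himgeq : ∀ x : V, x ≠ v → ∃ s ≤ k0, f s = x := by
    intro x hx
    have hsub : (Finset.range (k0+1)).image f ⊆ Finset.univ.erase v := by
      intro y hy
      obtain ⟨s, hs, rfl⟩ := Finset.mem_image.1 hy
      rw [Finset.mem_range] at hs
      exact Finset.mem_erase.2 ⟨hne s (by omega), Finset.mem_univ _⟩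
    have hcard1 : ((Finset.range (k0+1)).image f).card = k0 + 1 := by
      rw [Finset.card_image_of_injOn, Finset.card_range]
      intro a ha b hb hab
      rw [Finset.mem_coe, Finset.mem_range] at ha hb
      exact hinj a (by omega) b (by omega) hab
    have hcard2 : (Finset.univ.erase v).card = n - 1 := by
      rw [Finset.card_erase_of_mem (Finset.mem_univ v), Finset.card_univ]
    have heq : (Finset.range (k0+1)).image f = Finset.univ.erase v := by
      apply Finset.eq_of_subset_of_card_le hsub
      rw [hcard1, hcard2]; omega
    have hx2 : x ∈ (Finset.range (k0+1)).image f := by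
      rw [heq]; exact Finset.mem_erase.2 ⟨hx, Finset.mem_univ x⟩
    obtain ⟨s, hs, hfs⟩ := Finset.mem_image.1 hx2
    exact ⟨s, by rw [Finset.mem_range] at hs; omega, hfs⟩
  -- rotate the cycle so that it starts at u
  obtain ⟨s0, hs0, hfs0⟩ := himgeq u huv
  obtain ⟨t0, ht0, hct0⟩ := hc_img s0 hs0
  set y : ℕ → V := fun r => c ((t0 + r) % (k0 + 1)) with hy
  have hy0 : y 0 = u := by
    simp only [hy, Nat.add_zero, Nat.mod_eq_of_lt (show t0 < k0 + 1 by omega)]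
    rw [hct0, hfs0]
  have hy_adj : ∀ r < k0, G.Adj (y r) (y (r + 1)) := by
    intro r hr
    have := mod_rot_adj G c k0 t0 hc_adj hc_wrap r hr
    simpa [hy, show t0 + r + 1 = t0 + (r + 1) by omega] using this
  have hy_inj : ∀ a ≤ k0, ∀ b ≤ k0, y a = y b → a = b := by
    intro a ha b hb hab
    have hlt1 : (t0 + a) % (k0 + 1) < k0 + 1 := Nat.mod_lt _ (by omega)
    have hlt2 : (t0 + b) % (k0 + 1) < k0 + 1 := Nat.mod_lt _ (by omega)
    have h3 := hc_inj ((t0 + a) % (k0 + 1)) (by omega) ((t0 + b) % (k0 + 1)) (by omega) hab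
    exact mod_rot_inj k0 t0 a ha b hb h3
  have hy_cov : ∀ x : V, x ≠ v → ∃ r ≤ k0, y r = x := by
    intro x hx
    obtain ⟨s, hs, hfs⟩ := himgeq x hx
    obtain ⟨t', ht', hct'⟩ := hc_img s hs
    obtain ⟨r, hr, hmr⟩ := mod_rot_surj k0 t0 ht0 t' ht'
    exact ⟨r, hr, by rw [hy]; dsimp only; rw [hmr, hct', hfs]⟩
  have hy_ne : ∀ r ≤ k0, y r ≠ v := by
    intro r hr
    have := Nat.mod_lt (t0 + r) (show 0 < k0 + 1 by omega)
    exact hc_ne _ (by omega)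
  -- endpoint sets for the final rotation
  set E := (Finset.range k0).filter (fun j => G.Adj (y k0) (y j)) with hE
  set A' := (Finset.Icc 1 k0).filter (fun m => G.Adj v (y m)) with hA'
  have hEcard : n - 1 ≤ 2 * E.card := by
    have hsub : (G.neighborFinset (y k0)).erase v ⊆ E.image y := by
      intro w hw
      obtain ⟨hwv, hwadj⟩ := Finset.mem_erase.1 hw
      rw [SimpleGraph.mem_neighborFinset] at hwadj
      obtain ⟨r, hr, rfl⟩ := hy_cov w hwv
      have hrk : r ≠ k0 := by rintro rfl; exact G.irrefl hwadj
      exact Finset.mem_image.2 ⟨r, Finset.mem_filter.2 ⟨Finset.mem_range.2 (by omega), hwadj⟩, rfl⟩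
    have := (Finset.card_le_card hsub).trans Finset.card_image_le
    have := hNv (y k0)
    omega
  have hA'card : n - 1 ≤ 2 * A'.card := by
    have hsub : (G.neighborFinset v).erase u ⊆ A'.image y := by
      intro w hw
      obtain ⟨hwu, hwadj⟩ := Finset.mem_erase.1 hw
      rw [SimpleGraph.mem_neighborFinset] at hwadj
      have hwv : w ≠ v := fun h => G.irrefl (h ▸ hwadj)
      obtain ⟨r, hr, rfl⟩ := hy_cov w hwv
      have hr0 : r ≠ 0 := by rintro rfl; exact hwu hy0
      exact Finset.mem_image.2 ⟨r, Finset.mem_filter.2 ⟨Finset.mem_Icc.2 ⟨by omega, hr⟩, hwadj⟩, rfl⟩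
    have h1 := (Finset.card_le_card hsub).trans Finset.card_image_le
    have h2 : (G.neighborFinset v).card - 1 ≤ ((G.neighborFinset v).erase u).card :=
      Finset.pred_card_le_card_erase
    have h3 := hdx v
    rw [SimpleGraph.degree] at h3
    omega
  -- find the splitting index
  obtain ⟨m, hm⟩ : ∃ m, m ∈ (E.image (· + 1)) ∩ A' := by
    by_contra hcon
    push_neg at hcon
    have hdisj : (E.image (· + 1)) ∩ A' = ∅ := Finset.eq_empty_of_forall_notMem hcon
    have h1 : (E.image (· + 1)) ∪ A' ⊆ Finset.Icc 1 k0 := by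
      apply Finset.union_subset
      · intro x hx
        obtain ⟨j, hj, rfl⟩ := Finset.mem_image.1 hx
        have := Finset.mem_range.1 (Finset.mem_filter.1 hj).1
        exact Finset.mem_Icc.2 ⟨by omega, by omega⟩
      · exact Finset.filter_subset _ _
    have h2 := Finset.card_le_card h1
    have h3 := Finset.card_union_add_card_inter (E.image (· + 1)) A'
    have h4 : (E.image (· + 1)).card = E.card :=
      Finset.card_image_of_injOn (fun a _ b _ h => by omega)
    rw [hdisj] at h3
    rw [Nat.card_Icc] at h2
    simp only [Finset.card_empty] at h3
    omega
  obtain ⟨hmE, hmA'⟩ := Finset.mem_inter.1 hm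
  obtain ⟨j, hjE, hjm⟩ := Finset.mem_image.1 hmE
  have hjk : j < k0 := Finset.mem_range.1 (Finset.mem_filter.1 hjE).1
  have hjadj : G.Adj (y k0) (y j) := (Finset.mem_filter.1 hjE).2
  have hmadj : G.Adj v (y (j + 1)) := by
    have := (Finset.mem_filter.1 hmA').2
    rwa [← hjm] at this
  -- the final hamiltonian path
  set g : ℕ → V := fun r => if r ≤ j then y r else if r ≤ k0 then y (k0 + 1 + j - r) else v
    with hg
  have hg_adj : ∀ r < k0 + 1, G.Adj (g r) (g (r + 1)) := by
    intro r hr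
    rcases lt_trichotomy r j with h | h | h
    · simp only [hg, if_pos (show r ≤ j by omega), if_pos (show r + 1 ≤ j by omega)]
      exact hy_adj r (by omega)
    · subst h
      simp only [hg, if_pos le_rfl, if_neg (show ¬ (r + 1 ≤ r) by omega),
        if_pos (show r + 1 ≤ k0 by omega), show k0 + 1 + r - (r + 1) = k0 by omega]
      exact hjadj.symm
    · rcases lt_or_eq_of_le (show r ≤ k0 by omega) with h2 | h2
      · simp only [hg, if_neg (show ¬ (r ≤ j) by omega), if_neg (show ¬ (r + 1 ≤ j) by omega),
          if_pos (show r ≤ k0 by omega), if_pos (show r + 1 ≤ k0 by omega),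
          show k0 + 1 + j - (r + 1) = k0 + j - r by omega]
        have := hy_adj (k0 + j - r) (by omega)
        rw [show k0 + j - r + 1 = k0 + 1 + j - r by omega] at this
        exact this.symm
      · subst h2
        simp only [hg, if_neg (show ¬ (k0 ≤ j) by omega), if_pos le_rfl,
          if_neg (show ¬ (k0 + 1 ≤ j) by omega), if_neg (show ¬ (k0 + 1 ≤ k0) by omega),
          show k0 + 1 + j - k0 = j + 1 by omega]
        exact hmadj.symm
  have hg_inj : ∀ a ≤ k0 + 1, ∀ b ≤ k0 + 1, g a = g b → a = b := by
    intro a ha b hb hab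
    have key : ∀ r ≤ k0 + 1, (g r = v → r = k0 + 1) ∧ (r ≤ k0 → ∃ s ≤ k0, g r = y s ∧
        ((r ≤ j → s = r) ∧ (j < r → s = k0 + 1 + j - r))) := by
      intro r hrr
      constructor
      · intro hgv
        by_contra hne'
        have hrk : r ≤ k0 := by omega
        by_cases h1 : r ≤ j
        · rw [hg] at hgv; dsimp only at hgv; rw [if_pos h1] at hgv
          exact hy_ne r hrk hgv
        · rw [hg] at hgv; dsimp only at hgv; rw [if_neg h1, if_pos hrk] at hgv
          exact hy_ne _ (by omega) hgv
      · intro hrk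
        by_cases h1 : r ≤ j
        · exact ⟨r, hrk, by rw [hg]; dsimp only; rw [if_pos h1], fun _ => rfl, by omega⟩
        · refine ⟨k0 + 1 + j - r, by omega, ?_, by omega, fun _ => rfl⟩
          rw [hg]; dsimp only; rw [if_neg h1, if_pos hrk]
    by_cases ha' : a ≤ k0 <;> by_cases hb' : b ≤ k0
    · obtain ⟨sa, hsa, hga, hca⟩ := (key a ha).2 ha'
      obtain ⟨sb, hsb, hgb, hcb⟩ := (key b hb).2 hb'
      have := hy_inj sa hsa sb hsb (by rw [← hga, ← hgb, hab])
      rcases le_or_gt a j with h1 | h1 <;> rcases le_or_gt b j with h2 | h2 <;>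
        [skip; skip; skip; skip] <;>
      · first
        | (have e1 := hca.1 h1 <;> skip)
        | skip
        omega
    · have hbv : b = k0 + 1 := by omega
      obtain ⟨sa, hsa, hga, -⟩ := (key a ha).2 ha'
      exfalso
      have : g b = v := by rw [hg]; dsimp only; rw [if_neg (by omega), if_neg (by omega)]
      rw [this] at hab
      exact hy_ne sa hsa (by rw [← hga, hab])
    · have hav : a = k0 + 1 := by omega
      obtain ⟨sb, hsb, hgb, -⟩ := (key b hb).2 hb'
      exfalso
      have : g a = v := by rw [hg]; dsimp only; rw [if_neg (by omega), if_neg (by omega)]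
      rw [this] at hab
      exact hy_ne sb hsb (by rw [← hgb, ← hab])
    · omega
  have hg_cov : ∀ x : V, ∃ r ≤ k0 + 1, g r = x := by
    intro x
    by_cases hx : x = v
    · exact ⟨k0 + 1, le_rfl, by rw [hg]; dsimp only; rw [if_neg (by omega), if_neg (by omega), hx]⟩
    · obtain ⟨r', hr', hyr⟩ := hy_cov x hx
      rcases le_or_gt r' j with h | h
      · exact ⟨r', by omega, by rw [hg]; dsimp only; rw [if_pos h, hyr]⟩
      · refine ⟨k0 + 1 + j - r', by omega, ?_⟩
        rw [hg]; dsimp only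
        rw [if_neg (by omega), if_pos (by omega), show k0 + 1 + j - (k0 + 1 + j - r') = r' by omega,
          hyr]
  have hg0 : g 0 = u := by rw [hg]; dsimp only; rw [if_pos (Nat.zero_le j), hy0]
  have hgK : g (k0 + 1) = v := by
    rw [hg]; dsimp only; rw [if_neg (by omega), if_neg (by omega)]
  obtain ⟨p, hp⟩ := exists_walk_of_chain G g (k0 + 1) hg_adj
  refine ⟨(p.copy hg0 hgK), ?_⟩
  have hsupp : (p.copy hg0 hgK).support = (List.range (k0 + 2)).map g := by
    rw [SimpleGraph.Walk.support_copy, hp]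
  have hpath : (p.copy hg0 hgK).IsPath := by
    apply SimpleGraph.Walk.IsPath.mk'
    rw [hsupp]
    apply List.Nodup.map_on _ List.nodup_range
    intro a ha b hb hab
    rw [List.mem_range] at ha hb
    exact hg_inj a (by omega) b (by omega) hab
  apply hpath.isHamiltonian_of_mem
  intro w
  rw [hsupp]
  obtain ⟨r, hr, hgr⟩ := hg_cov w
  exact List.mem_map.2 ⟨r, List.mem_range.2 (by omega), hgr⟩
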